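/- The family of 6-element subsets of Z/53 ∪ (Z/53)' obtained as the full translation orbits under Z/53 of the base blocks [0,1,3,11,38,0'], [0,4,28',30',37',47'], [0,5,19,25,36',39'], [0,7,29,8',16',48'], [0,9,21,12',13',27'], [0,13,30,23',35',51'], [0,2',7',25',29',49'] is a Steiner system S(2,6,106). -/

import Mathlib

set_option maxRecDepth 100000
set_option maxHeartbeats 4000000

/-- The point set: two copies of Z/53. -/
abbrev PtsS26106 := ZMod 53 ⊕ ZMod 53

/-- Translation by n on both copies of Z/53. -/
def trS26106 (n : ZMod 53) : PtsS26106 → PtsS26106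
  | .inl a => .inl (a + n)
  | .inr a => .inr (a + n)

/-- First copy of Z/53 (unprimed points). -/
def u53 (a : ℕ) : PtsS26106 := .inl (a : ZMod 53)

/-- Second copy of Z/53 (primed points). -/
def p53 (a : ℕ) : PtsS26106 := .inr (a : ZMod 53)

/-- The seven base blocks of Mills' design. -/
def baseS26106 : Finset (Finset PtsS26106) :=
  { {u53 0, u53 1, u53 3, u53 11, u53 38, p53 0},
    {u53 0, u53 4, p53 28, p53 30, p53 37, p53 47},
    {u53 0, u53 5, u53 19, u53 25, p53 36, p53 39},
    {u53 0, u53 7, u53 29, p53 8, p53 16, p53 48},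
    {u53 0, u53 9, u53 21, p53 12, p53 13, p53 27},
    {u53 0, u53 13, u53 30, p53 23, p53 35, p53 51},
    {u53 0, p53 2, p53 7, p53 25, p53 29, p53 49} }

/-- All translates of the base blocks. -/
def blocksS26106 : Finset (Finset PtsS26106) :=
  Finset.univ.biUnion (fun n : ZMod 53 => baseS26106.image (fun b => b.image (trS26106 n)))

/-! ### Auxiliary machinery -/

/-- The base blocks, indexed by `Fin 7`. -/
def blkS : Fin 7 → Finset PtsS26106
  | 0 => {u53 0, u53 1, u53 3, u53 11, u53 38, p53 0}
  | 1 => {u53 0, u53 4, p53 28, p53 30, p53 37, p53 47}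
  | 2 => {u53 0, u53 5, u53 19, u53 25, p53 36, p53 39}
  | 3 => {u53 0, u53 7, u53 29, p53 8, p53 16, p53 48}
  | 4 => {u53 0, u53 9, u53 21, p53 12, p53 13, p53 27}
  | 5 => {u53 0, u53 13, u53 30, p53 23, p53 35, p53 51}
  | 6 => {u53 0, p53 2, p53 7, p53 25, p53 29, p53 49}

/-- Number of parameter pairs (translation, base-block index) whose block contains both
points. -/
def cntS (p q : PtsS26106) : ℕ :=
  (Finset.univ.filter (fun nc : ZMod 53 × Fin 7 =>
    trS26106 (-nc.1) p ∈ blkS nc.2 ∧ trS26106 (-nc.1) q ∈ blkS nc.2)).card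

lemma tr_add (m n : ZMod 53) (x : PtsS26106) :
    trS26106 m (trS26106 n x) = trS26106 (n + m) x := by
  cases x <;> simp [trS26106, add_assoc]

lemma tr_zero (x : PtsS26106) : trS26106 0 x = x := by
  cases x <;> simp [trS26106]

lemma tr_inj (n : ZMod 53) : Function.Injective (trS26106 n) := by
  intro x y h
  have h2 := congrArg (trS26106 (-n)) h
  rwa [tr_add, tr_add, add_neg_cancel, tr_zero, tr_zero] at h2

lemma mem_image_tr (p : PtsS26106) (n : ZMod 53) (c : Finset PtsS26106) :
    p ∈ c.image (trS26106 n) ↔ trS26106 (-n) p ∈ c := by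
  constructor
  · intro h
    rw [Finset.mem_image] at h
    obtain ⟨x, hx, rfl⟩ := h
    rwa [tr_add, add_neg_cancel, tr_zero]
  · intro h
    rw [Finset.mem_image]
    exact ⟨_, h, by rw [tr_add, neg_add_cancel, tr_zero]⟩

lemma blkS_mem_base : ∀ i : Fin 7, blkS i ∈ baseS26106 := by decide

lemma mem_base_iff (c : Finset PtsS26106) :
    c ∈ baseS26106 ↔ ∃ i : Fin 7, c = blkS i := by
  constructor
  · intro hc
    simp only [baseS26106, Finset.mem_insert, Finset.mem_singleton] at hc
    rcases hc with h | h | h | h | h | h | h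
    exacts [⟨0, h⟩, ⟨1, h⟩, ⟨2, h⟩, ⟨3, h⟩, ⟨4, h⟩, ⟨5, h⟩, ⟨6, h⟩]
  · rintro ⟨i, rfl⟩
    exact blkS_mem_base i

lemma mem_blocks_iff (b : Finset PtsS26106) :
    b ∈ blocksS26106 ↔ ∃ (n : ZMod 53) (i : Fin 7), b = (blkS i).image (trS26106 n) := by
  simp only [blocksS26106, Finset.mem_biUnion, Finset.mem_univ, true_and, Finset.mem_image]
  constructor
  · rintro ⟨n, c, hc, rfl⟩
    obtain ⟨i, rfl⟩ := (mem_base_iff c).mp hc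
    exact ⟨n, i, rfl⟩
  · rintro ⟨n, i, rfl⟩
    exact ⟨n, blkS i, blkS_mem_base i, rfl⟩

lemma exists_unique_of_cnt (p q : PtsS26106) (h : cntS p q = 1) :
    ∃! b, b ∈ blocksS26106 ∧ p ∈ b ∧ q ∈ b := by
  obtain ⟨nc, hnc⟩ := Finset.card_eq_one.mp h
  have hmem : nc ∈ (Finset.univ.filter (fun nc : ZMod 53 × Fin 7 =>
      trS26106 (-nc.1) p ∈ blkS nc.2 ∧ trS26106 (-nc.1) q ∈ blkS nc.2)) := by
    rw [hnc]; exact Finset.mem_singleton_self nc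
  rw [Finset.mem_filter] at hmem
  refine ⟨(blkS nc.2).image (trS26106 nc.1), ⟨?_, ?_, ?_⟩, ?_⟩
  · exact (mem_blocks_iff _).mpr ⟨nc.1, nc.2, rfl⟩
  · exact (mem_image_tr p nc.1 _).mpr hmem.2.1
  · exact (mem_image_tr q nc.1 _).mpr hmem.2.2
  · rintro b ⟨hb, hp, hq⟩
    obtain ⟨n, i, rfl⟩ := (mem_blocks_iff b).mp hb
    rw [mem_image_tr] at hp hq
    have heq : (n, i) ∈ (Finset.univ.filter (fun nc : ZMod 53 × Fin 7 =>
        trS26106 (-nc.1) p ∈ blkS nc.2 ∧ trS26106 (-nc.1) q ∈ blkS nc.2)) := by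
      rw [Finset.mem_filter]
      exact ⟨Finset.mem_univ _, hp, hq⟩
    rw [hnc, Finset.mem_singleton] at heq
    subst heq
    rfl

lemma cond_tr (m n : ZMod 53) (p : PtsS26106) :
    trS26106 (-n) (trS26106 m p) = trS26106 (-(n - m)) p := by
  rw [tr_add, show m + -n = -(n - m) by ring]

lemma cnt_tr (m : ZMod 53) (p q : PtsS26106) :
    cntS (trS26106 m p) (trS26106 m q) = cntS p q := by
  unfold cntS
  refine Finset.card_nbij' (fun nc => (nc.1 - m, nc.2)) (fun nc => (nc.1 + m, nc.2)) ?_ ?_ ?_ ?_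
  · intro a ha
    rw [Finset.mem_coe, Finset.mem_filter] at ha ⊢
    rw [cond_tr, cond_tr] at ha
    exact ⟨Finset.mem_univ _, ha.2⟩
  · intro a ha
    rw [Finset.mem_coe, Finset.mem_filter] at ha ⊢
    refine ⟨Finset.mem_univ _, ?_⟩
    rw [cond_tr, cond_tr]
    simpa using ha.2
  · intro a _
    simp
  · intro a _
    simp

lemma cnt_symm (p q : PtsS26106) : cntS p q = cntS q p := by
  unfold cntS
  congr 1
  ext nc
  simp only [Finset.mem_filter]
  tauto

theorem factC1 : ∀ x : PtsS26106, x ≠ u53 0 → cntS (u53 0) x = 1 := by decide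

theorem factC2 : ∀ a : ZMod 53, a ≠ 0 → cntS (p53 0) (Sum.inr a) = 1 := by decide

lemma cnt_eq_one (p q : PtsS26106) (hpq : p ≠ q) : cntS p q = 1 := by
  have keyL : ∀ (a : ZMod 53) (q : PtsS26106), Sum.inl a ≠ q → cntS (.inl a) q = 1 := by
    intro a q hq
    have h0 : trS26106 (-a) (Sum.inl a) = u53 0 := by simp [trS26106, u53]
    rw [← cnt_tr (-a), h0]
    apply factC1
    intro h
    exact hq (tr_inj (-a) (h0.trans h.symm))
  cases p with
  | inl a => exact keyL a q hpq
  | inr a =>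
    cases q with
    | inl b =>
      rw [cnt_symm]
      exact keyL b _ (Ne.symm hpq)
    | inr b =>
      have h0 : trS26106 (-a) (Sum.inr a) = p53 0 := by simp [trS26106, p53]
      rw [← cnt_tr (-a), h0]
      show cntS (p53 0) (Sum.inr (b + -a)) = 1
      apply factC2
      intro h
      exact hpq (by rw [add_neg_eq_zero.mp h])

/-- The translates of the seven base blocks form a Steiner system S(2,6,106). -/
theorem blocksS26106_is_steiner :
    Fintype.card PtsS26106 = 106 ∧
    (∀ b ∈ blocksS26106, b.card = 6) ∧
    (∀ p q : PtsS26106, p ≠ q → ∃! b, b ∈ blocksS26106 ∧ p ∈ b ∧ q ∈ b) := by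
  refine ⟨?_, ?_, ?_⟩
  · rw [Fintype.card_sum, ZMod.card]
  · intro b hb
    obtain ⟨n, i, rfl⟩ := (mem_blocks_iff b).mp hb
    rw [Finset.card_image_of_injective _ (tr_inj n)]
    have h6 : ∀ i : Fin 7, (blkS i).card = 6 := by decide
    exact h6 i
  · intro p q hpq
    exact exists_unique_of_cnt p q (cnt_eq_one p q hpq)
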